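/- The smallest subgroup of SL(2,ℤ) that contains the matrix P = [[1,0],[p,1]] and the subgroup Γ₁'(p²) and is closed under conjugation by arbitrary elements of SL(2,ℤ) (i.e., the normal closure in SL(2,ℤ) of the subgroup generated by P and Γ₁'(p²)) is equal to Γ₁(p). -/

import Mathlib

open Matrix MatrixGroups Subgroup

/-- Membership in `Γ₁(p) ⊆ SL(2,ℤ)`: congruent to the identity mod `p`. -/
def Gamma1Mem (p : ℕ) (A : Matrix (Fin 2) (Fin 2) ℤ) : Prop :=
  (p : ℤ) ∣ (A 0 0 - 1) ∧ (p : ℤ) ∣ A 0 1 ∧ (p : ℤ) ∣ A 1 0 ∧ (p : ℤ) ∣ (A 1 1 - 1)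

/-- Membership in `Γ₁'(p²) ⊆ SL(2,ℤ)`: `A - 1` lies in the pattern `[[p²ℤ,pℤ],[p³ℤ,p²ℤ]]`. -/
def Gamma1'Mem (p : ℕ) (A : Matrix (Fin 2) (Fin 2) ℤ) : Prop :=
  (p : ℤ)^2 ∣ (A 0 0 - 1) ∧ (p : ℤ) ∣ A 0 1 ∧ (p : ℤ)^3 ∣ A 1 0 ∧ (p : ℤ)^2 ∣ (A 1 1 - 1)

/-- The matrix `P = [[1,0],[p,1]]` as an element of `SL(2,ℤ)`. -/
def Pmat (p : ℕ) : Matrix.SpecialLinearGroup (Fin 2) ℤ :=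
  ⟨!![1, 0; (p : ℤ), 1], by norm_num [Matrix.det_fin_two_of]⟩

/-- `[[1,0],[pk,1]]` as an element of `SL(2,ℤ)`; it is the `k`-th power of `P`. -/
def Lmat (p : ℕ) (k : ℤ) : SL(2,ℤ) := ⟨!![1,0;(p:ℤ)*k,1], by norm_num [Matrix.det_fin_two_of]⟩

/-- The unipotent `[[1,-α],[0,1]]` as an element of `SL(2,ℤ)`. -/
def Gm (α : ℤ) : SL(2,ℤ) := ⟨!![1,-α;0,1], by norm_num [Matrix.det_fin_two_of]⟩

/-- The conjugate `Gm α * P * (Gm α)⁻¹` written explicitly. -/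
def Dm (p : ℕ) (α : ℤ) : SL(2,ℤ) :=
  ⟨!![1-(p:ℤ)*α, -((p:ℤ)*α^2); (p:ℤ), 1+(p:ℤ)*α], by simp [Matrix.det_fin_two_of]; ring⟩

lemma Lmat_mul (p : ℕ) (j k : ℤ) : Lmat p j * Lmat p k = Lmat p (j+k) := by
  apply Subtype.ext
  rw [Matrix.SpecialLinearGroup.coe_mul]
  simp [Lmat, Matrix.mul_fin_two]
  ring_nf

lemma Lmat_one (p : ℕ) : Lmat p 1 = Pmat p := by
  apply Subtype.ext; simp [Lmat, Pmat]

lemma Lmat_mem {p : ℕ} {N : Subgroup SL(2,ℤ)} (hP : Pmat p ∈ N) (k : ℤ) : Lmat p k ∈ N := by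
  induction k using Int.induction_on with
  | zero =>
    have : Lmat p 0 = 1 := by apply Subtype.ext; simp [Lmat, Matrix.one_fin_two]
    rw [this]; exact N.one_mem
  | succ i ih =>
    have : Lmat p (i+1) = Lmat p i * Pmat p := by rw [← Lmat_one, Lmat_mul]
    rw [this]; exact N.mul_mem ih hP
  | pred i ih =>
    have : Lmat p (-i-1) = Lmat p (-i) * (Pmat p)⁻¹ := by
      rw [eq_mul_inv_iff_mul_eq, ← Lmat_one p, Lmat_mul]; norm_num
    rw [this]; exact N.mul_mem ih (N.inv_mem hP)

lemma Gm_conj (p : ℕ) (α : ℤ) : Gm α * Pmat p * (Gm α)⁻¹ = Dm p α := by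
  rw [mul_inv_eq_iff_eq_mul]
  apply Subtype.ext
  simp only [Matrix.SpecialLinearGroup.coe_mul]
  show (!![1,-α;0,1] : Matrix (Fin 2) (Fin 2) ℤ) * !![1, 0; (p : ℤ), 1]
    = !![1-(p:ℤ)*α, -((p:ℤ)*α^2); (p:ℤ), 1+(p:ℤ)*α] * !![1,-α;0,1]
  rw [Matrix.mul_fin_two, Matrix.mul_fin_two]
  ext i j
  fin_cases i <;> fin_cases j <;> simp <;> ring

lemma mem_Gamma_iff (p : ℕ) (γ : SL(2,ℤ)) :
    γ ∈ CongruenceSubgroup.Gamma p ↔ Gamma1Mem p ↑γ := by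
  simp only [CongruenceSubgroup.Gamma_mem, Gamma1Mem,
    ← ZMod.intCast_zmod_eq_zero_iff_dvd, Int.cast_sub, Int.cast_one, sub_eq_zero]

/-- the normal closure in `SL(2,ℤ)` of the subgroup generated by
`P = [[1,0],[p,1]]` and `Γ₁'(p²)` equals `Γ₁(p)`. -/
theorem statement11 (p : ℕ) (hp : p.Prime) (hodd : Odd p) :
    (↑(Subgroup.normalClosure
        ({Pmat p} ∪ {g : Matrix.SpecialLinearGroup (Fin 2) ℤ | Gamma1'Mem p ↑g})) :
      Set (Matrix.SpecialLinearGroup (Fin 2) ℤ)) =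
      {g : Matrix.SpecialLinearGroup (Fin 2) ℤ | Gamma1Mem p ↑g} := by
  haveI := CongruenceSubgroup.Gamma_normal p
  ext A
  simp only [SetLike.mem_coe, Set.mem_setOf_eq]
  constructor
  · intro h
    rw [← mem_Gamma_iff]
    refine normalClosure_le_normal ?_ h
    rintro g (rfl | hg)
    · rw [SetLike.mem_coe, mem_Gamma_iff]
      refine ⟨?_, ?_, ?_, ?_⟩ <;> simp [Pmat]
    · rw [SetLike.mem_coe, mem_Gamma_iff]
      obtain ⟨h1, h2, h3, h4⟩ := hg
      exact ⟨(dvd_pow_self (p:ℤ) two_ne_zero).trans h1, h2,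
        (dvd_pow_self (p:ℤ) three_ne_zero).trans h3,
        (dvd_pow_self (p:ℤ) two_ne_zero).trans h4⟩
  · intro hA
    obtain ⟨⟨α, hα⟩, ⟨β, hβ⟩, ⟨γ, hγ⟩, ⟨δ, hδ⟩⟩ := hA
    have ha : (A : Matrix (Fin 2) (Fin 2) ℤ) 0 0 = 1 + (p:ℤ)*α := by linarith
    have hd : (A : Matrix (Fin 2) (Fin 2) ℤ) 1 1 = 1 + (p:ℤ)*δ := by linarith
    have hdet : (A : Matrix (Fin 2) (Fin 2) ℤ) 0 0 * (A : Matrix (Fin 2) (Fin 2) ℤ) 1 1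
        - (A : Matrix (Fin 2) (Fin 2) ℤ) 0 1 * (A : Matrix (Fin 2) (Fin 2) ℤ) 1 0 = 1 := by
      have h2 := A.2
      rwa [Matrix.det_fin_two] at h2
    rw [ha, hβ, hγ, hd] at hdet
    set k : ℤ := -((1 + (p:ℤ)*α) * (1 + γ)) with hk
    have h1 : Pmat p ∈ normalClosure
        ({Pmat p} ∪ {g : Matrix.SpecialLinearGroup (Fin 2) ℤ | Gamma1'Mem p ↑g}) :=
      subset_normalClosure (Set.mem_union_left _ rfl)
    have hDmem : Dm p α ∈ normalClosure
        ({Pmat p} ∪ {g : Matrix.SpecialLinearGroup (Fin 2) ℤ | Gamma1'Mem p ↑g}) := by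
      rw [← Gm_conj p α]
      exact Subgroup.normalClosure_normal.conj_mem (Pmat p) h1 (Gm α)
    have hLk : Lmat p k ∈ normalClosure
        ({Pmat p} ∪ {g : Matrix.SpecialLinearGroup (Fin 2) ℤ | Gamma1'Mem p ↑g}) :=
      Lmat_mem h1 k
    have hE : Gamma1'Mem p ↑(Lmat p k * Dm p α * A) := by
      refine ⟨⟨-(α^2*(1+γ)), ?_⟩, ⟨(1-(p:ℤ)*α)*β - α^2*(1+(p:ℤ)*δ), ?_⟩,
        ⟨(1+(p:ℤ)*α)*(1+γ)^2*α^2, ?_⟩,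
        ⟨k*((1-(p:ℤ)*α)*β - α^2*(1+(p:ℤ)*δ)) + β + β*γ, ?_⟩⟩ <;>
        simp only [Matrix.SpecialLinearGroup.coe_mul] <;> simp only [Lmat, Dm] <;>
        simp only [Matrix.mul_apply, Fin.sum_univ_two, Matrix.cons_val', Matrix.cons_val_zero,
          Matrix.cons_val_one, Matrix.head_cons, Matrix.head_fin_const, Matrix.empty_val',
          Matrix.cons_val_fin_one, Matrix.of_apply] <;>
        simp only [ha, hβ, hγ, hd, hk]
      · ring
      · ring
      · ring
      · linear_combination hdet
    have key : A = (Lmat p k * Dm p α)⁻¹ * (Lmat p k * Dm p α * A) := by group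
    rw [key]
    exact mul_mem (inv_mem (mul_mem hLk hDmem))
      (subset_normalClosure (Set.mem_union_right _ hE))
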